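/- Let p ≠ 2, 5 be prime and e(p) = v_p(F_{z(p)}). If p^{e(p)+1} divides k, then there is no positive integer n with n = k · z(n). -/

import Mathlib

open Nat Finset

/-- The Fibonacci entry point: least positive `m` with `n ∣ Nat.fib m`. -/
noncomputable def fibEntry (n : ℕ) : ℕ := sInf {m | 0 < m ∧ n ∣ Nat.fib m}

section Pisano

/-- Every `n > 1` divides some positive Fibonacci number. -/
lemma exists_pos_fib_dvd (n : ℕ) (hn : 1 < n) : ∃ m, 0 < m ∧ n ∣ Nat.fib m := by
  haveI : NeZero n := ⟨by omega⟩
  set f : ℕ → ZMod n × ZMod n := fun i => ((Nat.fib i : ZMod n), (Nat.fib (i+1) : ZMod n)) with hf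
  have step : ∀ i j, f (i+1) = f (j+1) → f i = f j := by
    intro i j hij
    rw [Prod.ext_iff] at hij ⊢
    obtain ⟨h1, h2⟩ := hij
    simp only [hf] at h1 h2 ⊢
    refine ⟨?_, h1⟩
    have e1 : (Nat.fib (i+2) : ZMod n) = Nat.fib i + Nat.fib (i+1) := by
      rw [Nat.fib_add_two]; push_cast; ring
    have e2 : (Nat.fib (j+2) : ZMod n) = Nat.fib j + Nat.fib (j+1) := by
      rw [Nat.fib_add_two]; push_cast; ring
    have : (Nat.fib i : ZMod n) + Nat.fib (i+1) = (Nat.fib j : ZMod n) + Nat.fib (j+1) := by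
      rw [← e1, ← e2]; exact_mod_cast h2
    rw [h1] at this
    exact add_right_cancel this
  have back : ∀ i d, f (i + d) = f i → f d = f 0 := by
    intro i
    induction i with
    | zero => intro d h; simpa using h
    | succ i ih =>
      intro d h
      apply ih
      apply step
      convert h using 2
      omega
  obtain ⟨x, y, hxy, hfxy⟩ := Finite.exists_ne_map_eq_of_infinite f
  have key : ∀ x y : ℕ, x < y → f x = f y → ∃ m, 0 < m ∧ n ∣ Nat.fib m := by
    intro x y hlt hxy'
    refine ⟨y - x, by omega, ?_⟩
    have : f (x + (y - x)) = f x := by rw [show x + (y - x) = y by omega]; exact hxy'.symm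
    have h0 := back x (y - x) this
    rw [Prod.ext_iff] at h0
    have : (Nat.fib (y - x) : ZMod n) = 0 := by simpa [hf] using h0.1
    exact (ZMod.natCast_eq_zero_iff _ _).1 this
  rcases (Ne.lt_or_gt hxy) with h | h
  · exact key x y h hfxy
  · exact key y x h hfxy.symm

lemma fibEntry_mem {n : ℕ} (h : ∃ m, 0 < m ∧ n ∣ Nat.fib m) :
    0 < fibEntry n ∧ n ∣ Nat.fib (fibEntry n) :=
  Nat.sInf_mem h

lemma fibEntry_dvd {n M : ℕ} (hn : n ∣ Nat.fib (fibEntry n)) (h0 : 0 < fibEntry n)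
    (hM : 0 < M) (hdvd : n ∣ Nat.fib M) : fibEntry n ∣ M := by
  set z := fibEntry n with hz
  set g := Nat.gcd z M with hg
  have hg0 : 0 < g := Nat.gcd_pos_of_pos_left _ h0
  have hgd : n ∣ Nat.fib g := by
    rw [hg, Nat.fib_gcd]; exact Nat.dvd_gcd hn hdvd
  have hle : z ≤ g := Nat.sInf_le ⟨hg0, hgd⟩
  have hgz : g = z := le_antisymm (Nat.le_of_dvd h0 (Nat.gcd_dvd_left _ _)) hle
  exact hgz ▸ Nat.gcd_dvd_right z M

end Pisano

section Golden

private def gu : Zsqrtd 5 := ⟨1, 1⟩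

private lemma gu_mul_gu : gu * gu = ((2:ℤ) : Zsqrtd 5) * gu + ((4:ℤ) : Zsqrtd 5) := by
  ext <;> simp [gu, Zsqrtd.re_mul, Zsqrtd.im_mul]

private lemma gu_rec (n : ℕ) :
    gu ^ (n+2) = ((2:ℤ) : Zsqrtd 5) * gu ^ (n+1) + ((4:ℤ) : Zsqrtd 5) * gu ^ n := by
  have h : gu ^ (n+2) = gu ^ n * (gu * gu) := by ring
  rw [h, gu_mul_gu]; ring

private lemma gu_pow_im (n : ℕ) : (gu ^ (n+1)).im = 2 ^ n * (Nat.fib (n+1) : ℤ) := by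
  have main : ∀ n : ℕ, (gu ^ (n+1)).im = 2 ^ n * (Nat.fib (n+1) : ℤ) ∧
      (gu ^ (n+2)).im = 2 ^ (n+1) * (Nat.fib (n+2) : ℤ) := by
    intro n
    induction n with
    | zero =>
      constructor
      · simp [gu]
      · rw [show gu ^ 2 = gu * gu by ring, gu_mul_gu]
        simp [gu, Zsqrtd.im_add, Zsqrtd.im_smul]
    | succ n ih =>
      refine ⟨ih.2, ?_⟩
      rw [gu_rec (n+1), Zsqrtd.im_add, Zsqrtd.im_smul, Zsqrtd.im_smul, ih.1, ih.2,
        Nat.fib_add_two (n := n+1)]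
      push_cast
      ring
  exact (main n).1

private lemma gu_pow_norm (n : ℕ) : Zsqrtd.norm (gu ^ n) = (-4) ^ n := by
  induction n with
  | zero => simp
  | succ n ih =>
    rw [pow_succ, Zsqrtd.norm_mul, ih, pow_succ]
    have : Zsqrtd.norm gu = -4 := by simp [Zsqrtd.norm_def, gu]
    rw [this]

/-- If an odd prime divides the `im` part of `gu ^ m`, it does not divide the `re` part. -/
private lemma not_dvd_re {p : ℕ} (hp : p.Prime) (hp2 : p ≠ 2) {m : ℕ}
    (hb : (p : ℤ) ∣ (gu ^ m).im) : ¬ (p : ℤ) ∣ (gu ^ m).re := by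
  intro ha
  have hnorm := gu_pow_norm m
  rw [Zsqrtd.norm_def] at hnorm
  have hpZ : Prime (p : ℤ) := Nat.prime_iff_prime_int.mp hp
  have hdvd : (p : ℤ) ∣ (-4 : ℤ) ^ m := by
    rw [← hnorm]
    exact dvd_sub (ha.mul_left _) (hb.mul_left _)
  have h4 : (p : ℤ) ∣ 4 := (dvd_neg).mp (hpZ.dvd_of_dvd_pow hdvd)
  have h4' : p ∣ 4 := by exact_mod_cast h4
  have hd2 : p ∣ 2 := hp.dvd_of_dvd_pow (show p ∣ 2 ^ 2 by norm_num [h4'])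
  have := (Nat.prime_dvd_prime_iff_eq hp Nat.prime_two).mp hd2
  exact hp2 this

private def imHom : Zsqrtd 5 →+ ℤ where
  toFun := Zsqrtd.im
  map_zero' := rfl
  map_add' := fun _ _ => rfl

end Golden

section Key

private lemma three_pow_ge (w : ℕ) : (w + 1) + 2 ≤ 3 ^ (w + 1) := by
  induction w with
  | zero => norm_num
  | succ w ih =>
    have h1 : (1:ℕ) ≤ 3 ^ (w+1) := Nat.one_le_pow _ _ (by norm_num)
    calc (w + 2) + 2 ≤ 3 ^ (w+1) + 1 := by omega
      _ ≤ 3 * 3 ^ (w+1) := by omega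
      _ = 3 ^ (w+2) := by ring

private lemma choose_val {p : ℕ} (hp : p.Prime) {t j : ℕ} (ht : 0 < t) (hj1 : 1 ≤ j)
    (hjt : j ≤ t) : p ^ (padicValNat p t - padicValNat p j) ∣ Nat.choose t j := by
  haveI : Fact p.Prime := ⟨hp⟩
  have hC : 0 < Nat.choose t j := Nat.choose_pos hjt
  have hid : t * Nat.choose (t-1) (j-1) = Nat.choose t j * j := by
    have h := Nat.add_one_mul_choose_eq (t-1) (j-1)
    rwa [Nat.sub_add_cancel ht,
      Nat.sub_add_cancel hj1] at h
  have hC' : 0 < Nat.choose (t-1) (j-1) := Nat.choose_pos (by omega)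
  have h1 : padicValNat p t ≤ padicValNat p (Nat.choose t j * j) := by
    rw [← hid, padicValNat.mul ht.ne' hC'.ne']
    omega
  rw [padicValNat.mul hC.ne' (by omega : j ≠ 0)] at h1
  rw [padicValNat_dvd_iff_le hC.ne']
  omega

private lemma fib_padicValNat_le {p : ℕ} (hp : p.Prime) (hp2 : p ≠ 2)
    {m : ℕ} (hm : 0 < m) (hpm : p ∣ Nat.fib m) {t : ℕ} (ht : 0 < t) :
    padicValNat p (Nat.fib (m * t)) ≤ padicValNat p (Nat.fib m) + padicValNat p t := by
  haveI : Fact p.Prime := ⟨hp⟩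
  set e := padicValNat p (Nat.fib m) with he
  set v := padicValNat p t with hv
  have hfib0 : Nat.fib m ≠ 0 := (Nat.fib_pos.mpr hm).ne'
  have hmt0 : 0 < m * t := Nat.mul_pos hm ht
  have hfmt0 : Nat.fib (m * t) ≠ 0 := (Nat.fib_pos.mpr hmt0).ne'
  by_contra hcon
  push_neg at hcon
  have hdvd : p ^ (e + v + 1) ∣ Nat.fib (m * t) := by
    rw [padicValNat_dvd_iff_le hfmt0]; omega
  -- decompositions
  obtain ⟨f, hf⟩ := pow_padicValNat_dvd (p := p) (n := Nat.fib m)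
  have hpf : ¬ p ∣ f := by
    intro hd
    refine pow_succ_padicValNat_not_dvd (p := p) hfib0 ?_
    rw [pow_succ]
    calc p ^ padicValNat p (Nat.fib m) * p ∣ p ^ padicValNat p (Nat.fib m) * f :=
          mul_dvd_mul_left _ hd
      _ = Nat.fib m := hf.symm
  obtain ⟨w, hw⟩ := pow_padicValNat_dvd (p := p) (n := t)
  have hpw : ¬ p ∣ w := by
    intro hd
    refine pow_succ_padicValNat_not_dvd (p := p) ht.ne' ?_
    rw [pow_succ]
    calc p ^ padicValNat p t * p ∣ p ^ padicValNat p t * w := mul_dvd_mul_left _ hd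
      _ = t := hw.symm
  have he1 : 1 ≤ e := by
    rw [he, ← padicValNat_dvd_iff_le hfib0, pow_one]; exact hpm
  -- the golden ring
  set a := (gu ^ m).re with ha
  set b := (gu ^ m).im with hb
  have hbm : b = 2 ^ (m-1) * (Nat.fib m : ℤ) := by
    have := gu_pow_im (m-1)
    rwa [Nat.sub_add_cancel hm] at this
  have hpb : (p : ℤ) ∣ b := by
    rw [hbm]
    exact Dvd.dvd.mul_left (Int.natCast_dvd_natCast.mpr hpm) _
  have hpa : ¬ (p : ℤ) ∣ a := not_dvd_re hp hp2 hpb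
  have hpZ : Prime (p : ℤ) := Nat.prime_iff_prime_int.mp hp
  have hdecomp : gu ^ m = Zsqrtd.sqrtd * (b : Zsqrtd 5) + (a : Zsqrtd 5) := by
    have : gu ^ m = (⟨a, b⟩ : Zsqrtd 5) := rfl
    rw [this, Zsqrtd.decompose]; ring
  set g : ℕ → ℤ := fun j => (b ^ j * a ^ (t - j) * (Nat.choose t j : ℤ)) * (Zsqrtd.sqrtd ^ j).im
    with hg
  have him : (gu ^ (m * t)).im = ∑ j ∈ Finset.range (t + 1), g j := by
    have hsum : gu ^ (m * t)
        = ∑ j ∈ Finset.range (t + 1),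
          (((b ^ j * a ^ (t - j) * (Nat.choose t j : ℤ)) : ℤ) : Zsqrtd 5) * Zsqrtd.sqrtd ^ j := by
      rw [pow_mul, hdecomp, add_pow]
      refine Finset.sum_congr rfl fun j _ => ?_
      push_cast
      ring
    calc (gu ^ (m * t)).im = imHom (gu ^ (m * t)) := rfl
      _ = ∑ j ∈ Finset.range (t + 1), imHom
            ((((b ^ j * a ^ (t - j) * (Nat.choose t j : ℤ)) : ℤ) : Zsqrtd 5) * Zsqrtd.sqrtd ^ j) := by
          rw [hsum, map_sum]
      _ = ∑ j ∈ Finset.range (t + 1), g j := by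
          refine Finset.sum_congr rfl fun j _ => ?_
          show ((((b ^ j * a ^ (t - j) * (Nat.choose t j : ℤ)) : ℤ) : Zsqrtd 5)
            * Zsqrtd.sqrtd ^ j).im = _
          rw [Zsqrtd.im_smul]
  have hlhs : (gu ^ (m * t)).im = 2 ^ (m * t - 1) * (Nat.fib (m * t) : ℤ) := by
    have := gu_pow_im (m * t - 1)
    rwa [Nat.sub_add_cancel hmt0] at this
  have hPsum : (p : ℤ) ^ (e + v + 1) ∣ ∑ j ∈ Finset.range (t + 1), g j := by
    rw [← him, hlhs]
    have hcast : ((p ^ (e + v + 1) : ℕ) : ℤ) ∣ ((Nat.fib (m * t) : ℕ) : ℤ) :=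
      Int.natCast_dvd_natCast.mpr hdvd
    push_cast at hcast
    exact Dvd.dvd.mul_left hcast _
  -- every term except j = 1 is divisible by p^(e+v+1)
  have h1mem : 1 ∈ Finset.range (t + 1) := Finset.mem_range.mpr (by omega)
  have herase : ∀ j ∈ (Finset.range (t + 1)).erase 1, (p : ℤ) ^ (e + v + 1) ∣ g j := by
    intro j hj
    obtain ⟨hj1, hjr⟩ := Finset.mem_erase.mp hj
    have hjt : j ≤ t := by have := Finset.mem_range.mp hjr; omega
    rcases Nat.eq_zero_or_pos j with rfl | hj0
    · have : g 0 = 0 := by simp [hg]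
      rw [this]; exact dvd_zero _
    have hj2 : 2 ≤ j := by omega
    set wj := padicValNat p j with hwj
    have hjw : wj + 2 ≤ j := by
      rcases Nat.eq_zero_or_pos wj with h0 | h1
      · omega
      · obtain ⟨w', hw'⟩ : ∃ w', wj = w' + 1 := ⟨wj - 1, by omega⟩
        have hdj : p ^ (w' + 1) ∣ j := hw' ▸ hwj ▸ pow_padicValNat_dvd
        have hj3 : 3 ^ (w' + 1) ≤ p ^ (w' + 1) :=
          Nat.pow_le_pow_left (by have := hp.two_le; omega) _
        have h3g := three_pow_ge w'
        have := Nat.le_of_dvd (by omega) hdj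
        omega
    have hA : (p : ℤ) ^ (v - wj) ∣ (Nat.choose t j : ℤ) := by
      have := choose_val hp ht (by omega) hjt
      exact_mod_cast Int.natCast_dvd_natCast.mpr this
    have hpe : (p : ℤ) ^ e ∣ b := by
      rw [hbm, hf]
      push_cast
      exact Dvd.dvd.mul_left (Dvd.dvd.mul_right (dvd_refl _) _) _
    have hB : (p : ℤ) ^ (j * e) ∣ b ^ j := by
      rw [mul_comm j e, pow_mul]
      exact pow_dvd_pow_of_dvd hpe j
    have hexp : e + v + 1 ≤ (v - wj) + j * e := by
      have h1 : (wj + 2) * e ≤ j * e := Nat.mul_le_mul_right e hjw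
      have h2 : wj + e + 1 ≤ (wj + 2) * e := by nlinarith
      omega
    have hCB : (p : ℤ) ^ ((v - wj) + j * e) ∣ (Nat.choose t j : ℤ) * b ^ j := by
      rw [pow_add]
      exact mul_dvd_mul hA hB
    have hgj : g j = ((Nat.choose t j : ℤ) * b ^ j)
        * (a ^ (t - j) * ((Zsqrtd.sqrtd ^ j : Zsqrtd 5)).im) := by
      rw [hg]; ring
    rw [hgj]
    exact dvd_mul_of_dvd_left ((pow_dvd_pow _ hexp).trans hCB) _
  -- hence p^(e+v+1) divides the j = 1 term
  have hg1 : (p : ℤ) ^ (e + v + 1) ∣ g 1 := by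
    have hsum := Finset.add_sum_erase (Finset.range (t + 1)) g h1mem
    have hrew : g 1 = (∑ j ∈ Finset.range (t + 1), g j)
        - ∑ j ∈ (Finset.range (t + 1)).erase 1, g j := by
      rw [← hsum]; ring
    rw [hrew]
    exact dvd_sub hPsum (Finset.dvd_sum herase)
  -- but the j = 1 term has p-adic valuation exactly e + v
  have hg1eq : g 1 = (p : ℤ) ^ (e + v) * (2 ^ (m-1) * (f : ℤ) * a ^ (t - 1) * (w : ℤ)) := by
    rw [hg]
    simp only [pow_one, Nat.choose_one_right, Zsqrtd.im_sqrtd, mul_one]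
    rw [hbm, hf, hw]
    push_cast
    rw [pow_add]
    ring
  rw [hg1eq, _root_.pow_succ'] at hg1
  have hpX : (p : ℤ) ∣ 2 ^ (m-1) * (f : ℤ) * (a ^ (t - 1) * (w : ℤ)) := by
    have hne : ((p : ℤ)) ^ (e + v) ≠ 0 := pow_ne_zero _ (by exact_mod_cast hp.pos.ne')
    rw [mul_comm ((p:ℤ)) ((p:ℤ) ^ (e+v))] at hg1
    rw [mul_assoc] at hg1
    exact (mul_dvd_mul_iff_left hne).mp hg1
  -- now derive a contradiction
  rcases hpZ.dvd_mul.mp hpX with hd | hd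
  · rcases hpZ.dvd_mul.mp hd with hd3 | hd3
    · have h2' : (p : ℤ) ∣ 2 := hpZ.dvd_of_dvd_pow hd3
      have h2'' : p ∣ 2 := by exact_mod_cast h2'
      exact hp2 ((Nat.prime_dvd_prime_iff_eq hp Nat.prime_two).mp h2'')
    · exact hpf (by exact_mod_cast hd3)
  · rcases hpZ.dvd_mul.mp hd with hd2 | hd2
    · exact hpa (hpZ.dvd_of_dvd_pow hd2)
    · exact hpw (by exact_mod_cast hd2)

end Key

theorem no_self_fib_divisor_of_prime_pow_dvd (p : ℕ) (hp : p.Prime) (hp2 : p ≠ 2)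
    (hp5 : p ≠ 5) (k : ℕ) (hk : 0 < k)
    (h : p ^ (padicValNat p (Nat.fib (fibEntry p)) + 1) ∣ k) :
    ¬ ∃ n : ℕ, 0 < n ∧ n = k * fibEntry n := by
  haveI : Fact p.Prime := ⟨hp⟩
  rintro ⟨n, hn, heq⟩
  set z := fibEntry n with hzdef
  have hz0 : 0 < z := by
    rcases Nat.eq_zero_or_pos z with h0 | hpos
    · rw [h0, mul_zero] at heq; omega
    · exact hpos
  have hnonempty : ∃ m, 0 < m ∧ n ∣ Nat.fib m := by
    by_contra hne
    push_neg at hne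
    have hempty : {m | 0 < m ∧ n ∣ Nat.fib m} = ∅ := by
      ext m
      simp only [Set.mem_setOf_eq, Set.mem_empty_iff_false, iff_false, not_and]
      exact fun hm hd => hne m hm hd
    have : z = 0 := by rw [hzdef, fibEntry, hempty, Nat.sInf_empty]
    omega
  have hnz : n ∣ Nat.fib z := (fibEntry_mem hnonempty).2
  obtain ⟨hzp0, hpzp⟩ := fibEntry_mem (exists_pos_fib_dvd p hp.one_lt)
  set zp := fibEntry p with hzpdef
  set e := padicValNat p (Nat.fib zp) with hedef
  have hpk : p ∣ k := dvd_trans (dvd_pow_self p (Nat.succ_ne_zero _)) h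
  have hpn : p ∣ n := by rw [heq]; exact Dvd.dvd.mul_right hpk z
  have hpfz : p ∣ Nat.fib z := hpn.trans hnz
  obtain ⟨t, hzt⟩ := fibEntry_dvd hpzp hzp0 hz0 hpfz
  have ht0 : 0 < t := by
    rcases Nat.eq_zero_or_pos t with h0 | hpos
    · rw [h0, mul_zero] at hzt; omega
    · exact hpos
  have hk0 : k ≠ 0 := hk.ne'
  have hfz0 : Nat.fib z ≠ 0 := (Nat.fib_pos.mpr hz0).ne'
  have h1 : e + 1 ≤ padicValNat p k := (padicValNat_dvd_iff_le hk0).mp h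
  have h2 : padicValNat p n = padicValNat p k + padicValNat p z := by
    rw [heq]; exact padicValNat.mul hk0 hz0.ne'
  have h3 : padicValNat p z = padicValNat p zp + padicValNat p t := by
    rw [hzt]; exact padicValNat.mul hzp0.ne' ht0.ne'
  have h4 : padicValNat p n ≤ padicValNat p (Nat.fib z) :=
    (padicValNat_dvd_iff_le hfz0).mp (dvd_trans pow_padicValNat_dvd hnz)
  have h5 : padicValNat p (Nat.fib z) ≤ e + padicValNat p t := by
    rw [hzt]; exact fib_padicValNat_le hp hp2 hzp0 hpzp ht0
  omega
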